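/- With Ũ = Ũ_{A,S} as defined in the context: (i) there is a unique k-algebra homomorphism π : Ũ → End_k(A) such that π(⟨α⟩) is multiplication by α on A and π(⟨s⟩) = a_S(s), for all α ∈ A and s ∈ S (so A becomes a left Ũ-module); (ii) defining the augmentation ε : Ũ → A by ε(u) = π(u)(1_A), the kernel of ε equals the left ideal K of Ũ generated by the set {⟨s⟩ : s ∈ S}; consequently ε induces an isomorphism of left Ũ-modules Ũ/K ≅ A, i.e. there is a short exact sequence of left Ũ-modules 0 → K → Ũ → A → 0. -/
import Mathlib


/-- The relations defining `Ũ_{A,S}` inside the free associative algebra on `A ⊔ S`. -/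
inductive UtildeRel (k A S : Type*) [CommRing k] [CommRing A] [Algebra k A]
    (aS : S → Derivation k A A) :
    FreeAlgebra k (A ⊕ S) → FreeAlgebra k (A ⊕ S) → Prop
  | add (α β : A) : UtildeRel k A S aS
      (FreeAlgebra.ι k (Sum.inl α) + FreeAlgebra.ι k (Sum.inl β))
      (FreeAlgebra.ι k (Sum.inl (α + β)))
  | mul (α β : A) : UtildeRel k A S aS
      (FreeAlgebra.ι k (Sum.inl α) * FreeAlgebra.ι k (Sum.inl β))
      (FreeAlgebra.ι k (Sum.inl (α * β)))
  | der (s : S) (α : A) : UtildeRel k A S aS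
      (FreeAlgebra.ι k (Sum.inr s) * FreeAlgebra.ι k (Sum.inl α))
      (FreeAlgebra.ι k (Sum.inl α) * FreeAlgebra.ι k (Sum.inr s)
        + FreeAlgebra.ι k (Sum.inl (aS s α)))
  | scalar (c : k) : UtildeRel k A S aS
      (algebraMap k (FreeAlgebra k (A ⊕ S)) c)
      (FreeAlgebra.ι k (Sum.inl (algebraMap k A c)))

/-- `Ũ = Ũ_{A,S}`, the quotient of the free associative `k`-algebra on `A ⊔ S` by the
two-sided ideal generated by the relations `UtildeRel`. -/
abbrev Utilde (k A S : Type*) [CommRing k] [CommRing A] [Algebra k A]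
    (aS : S → Derivation k A A) : Type _ :=
  RingQuot (UtildeRel k A S aS)

/-- The class `⟨α⟩ ∈ Ũ` of a generator coming from `α ∈ A`. -/
noncomputable def UtildeA (k A S : Type*) [CommRing k] [CommRing A] [Algebra k A]
    (aS : S → Derivation k A A) : A → Utilde k A S aS :=
  fun α => RingQuot.mkAlgHom k (UtildeRel k A S aS) (FreeAlgebra.ι k (Sum.inl α))

/-- The class `⟨s⟩ ∈ Ũ` of a generator coming from `s ∈ S`. -/
noncomputable def UtildeS (k A S : Type*) [CommRing k] [CommRing A] [Algebra k A]
    (aS : S → Derivation k A A) : S → Utilde k A S aS :=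
  fun s => RingQuot.mkAlgHom k (UtildeRel k A S aS) (FreeAlgebra.ι k (Sum.inr s))

section Aux

variable {k A S : Type*} [CommRing k] [CommRing A] [Algebra k A]
  (aS : S → Derivation k A A)

/-- The candidate for `π` on the free algebra. -/
noncomputable def utildePiAux : FreeAlgebra k (A ⊕ S) →ₐ[k] Module.End k A :=
  FreeAlgebra.lift k (Sum.elim (fun α => Algebra.lmul k A α) (fun s => (aS s).toLinearMap))

theorem utildePiAux_rel {x y : FreeAlgebra k (A ⊕ S)} (h : UtildeRel k A S aS x y) :
    utildePiAux aS x = utildePiAux aS y := by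
  induction h with
  | add α β => simp [utildePiAux, map_add]
  | mul α β =>
    simp only [map_mul, utildePiAux, FreeAlgebra.lift_ι_apply, Sum.elim_inl]
  | der s α =>
    simp only [map_mul, map_add, utildePiAux, FreeAlgebra.lift_ι_apply, Sum.elim_inl,
      Sum.elim_inr]
    ext x
    simp [Derivation.leibniz, mul_comm, Algebra.lmul]
  | scalar c =>
    simp only [AlgHom.commutes, utildePiAux, FreeAlgebra.lift_ι_apply, Sum.elim_inl]

/-- `π`. -/
noncomputable def utildePi : Utilde k A S aS →ₐ[k] Module.End k A :=
  RingQuot.liftAlgHom k ⟨utildePiAux aS, fun _ _ h => utildePiAux_rel aS h⟩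

theorem utildePi_A (α : A) : utildePi aS (UtildeA k A S aS α) = Algebra.lmul k A α := by
  simp [utildePi, UtildeA, RingQuot.liftAlgHom_mkAlgHom_apply, utildePiAux]

theorem utildePi_S (s : S) : utildePi aS (UtildeS k A S aS s) = (aS s).toLinearMap := by
  simp [utildePi, UtildeS, RingQuot.liftAlgHom_mkAlgHom_apply, utildePiAux]

theorem utildeA_add (α β : A) :
    UtildeA k A S aS (α + β) = UtildeA k A S aS α + UtildeA k A S aS β := by
  have := RingQuot.mkAlgHom_rel k (UtildeRel.add (aS := aS) α β)
  simpa [UtildeA, map_add] using this.symm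

theorem utildeA_mul (α β : A) :
    UtildeA k A S aS (α * β) = UtildeA k A S aS α * UtildeA k A S aS β := by
  have := RingQuot.mkAlgHom_rel k (UtildeRel.mul (aS := aS) α β)
  simpa [UtildeA, map_mul] using this.symm

theorem utildeA_zero : UtildeA k A S aS 0 = 0 := by
  have h := utildeA_add aS (0 : A) 0
  rw [add_zero] at h
  exact (left_eq_add.mp h)

theorem utilde_der (s : S) (α : A) :
    UtildeS k A S aS s * UtildeA k A S aS α =
      UtildeA k A S aS α * UtildeS k A S aS s + UtildeA k A S aS (aS s α) := by
  have := RingQuot.mkAlgHom_rel k (UtildeRel.der (aS := aS) s α)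
  simpa [UtildeA, UtildeS, map_mul, map_add] using this

theorem utilde_scalar (c : k) :
    algebraMap k (Utilde k A S aS) c = UtildeA k A S aS (algebraMap k A c) := by
  have := RingQuot.mkAlgHom_rel k (UtildeRel.scalar (aS := aS) (A := A) (S := S) c)
  simpa [UtildeA] using this

theorem utilde_induction {C : Utilde k A S aS → Prop}
    (halg : ∀ c : k, C (algebraMap k _ c))
    (hA : ∀ α : A, C (UtildeA k A S aS α))
    (hS : ∀ s : S, C (UtildeS k A S aS s))
    (hmul : ∀ u v, C u → C v → C (u * v))
    (hadd : ∀ u v, C u → C v → C (u + v)) : ∀ u, C u := by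
  intro u
  obtain ⟨x, rfl⟩ := RingQuot.mkAlgHom_surjective k (UtildeRel k A S aS) u
  induction x using FreeAlgebra.induction with
  | grade0 c => rw [AlgHom.commutes]; exact halg c
  | grade1 x =>
    cases x with
    | inl α => exact hA α
    | inr s => exact hS s
  | mul a b ha hb => rw [map_mul]; exact hmul _ _ ha hb
  | add a b ha hb => rw [map_add]; exact hadd _ _ ha hb

end Aux

set_option maxRecDepth 8000 in
set_option maxHeartbeats 1000000 in
/-- (i) There is a unique `k`-algebra homomorphism `π : Ũ → End_k(A)` with `π(⟨α⟩)` equal to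
multiplication by `α` and `π(⟨s⟩) = a_S(s)` (so `A` becomes a left `Ũ`-module);
(ii) defining the augmentation `ε : Ũ → A` by `ε(u) = π(u)(1)`, the kernel of `ε` equals the
left ideal `K` of `Ũ` generated by `{⟨s⟩ : s ∈ S}`, and `ε` is surjective; consequently `ε`
induces an isomorphism of left `Ũ`-modules `Ũ/K ≅ A`, i.e. there is a short exact sequence of
left `Ũ`-modules `0 → K → Ũ → A → 0`. -/
theorem utilde_augmentation
    (k A S : Type*) [Field k] [CommRing A] [Algebra k A]
    (aS : S → Derivation k A A) :
    -- (i) existence and uniqueness of π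
    (∃! π : Utilde k A S aS →ₐ[k] Module.End k A,
      (∀ α : A, π (UtildeA k A S aS α) = Algebra.lmul k A α) ∧
      (∀ s : S, π (UtildeS k A S aS s) = (aS s).toLinearMap)) ∧
    -- (ii) for any such π, the kernel of ε = π(·)(1) is the left ideal generated by the ⟨s⟩,
    -- and ε is surjective
    (∀ π : Utilde k A S aS →ₐ[k] Module.End k A,
      ((∀ α : A, π (UtildeA k A S aS α) = Algebra.lmul k A α) ∧
       (∀ s : S, π (UtildeS k A S aS s) = (aS s).toLinearMap)) →
      (∀ u : Utilde k A S aS,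
        π u (1 : A) = 0 ↔
          u ∈ Submodule.span (Utilde k A S aS) (Set.range (UtildeS k A S aS))) ∧
      Function.Surjective (fun u : Utilde k A S aS => π u (1 : A))) := by
  constructor
  · refine ⟨utildePi aS, ⟨utildePi_A aS, utildePi_S aS⟩, ?_⟩
    rintro π ⟨hA, hS⟩
    refine AlgHom.ext (utilde_induction aS ?_ ?_ ?_ ?_ ?_)
    · intro c; rw [AlgHom.commutes, AlgHom.commutes]
    · intro α; rw [hA, utildePi_A]
    · intro s; rw [hS, utildePi_S]
    · intro u v hu hv; rw [map_mul, map_mul, hu, hv]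
    · intro u v hu hv; rw [map_add, map_add, hu, hv]
  · rintro π ⟨hA, hS⟩
    set K := Submodule.span (Utilde k A S aS) (Set.range (UtildeS k A S aS)) with hK
    -- ε of elements of K is zero
    have hεK : ∀ u ∈ K, π u (1 : A) = 0 := by
      intro u hu
      induction hu using Submodule.span_induction with
      | mem x hx =>
        obtain ⟨s, rfl⟩ := hx
        rw [hS]
        exact (aS s).map_one_eq_zero
      | zero => simp
      | add x y _ _ hx hy => rw [map_add, LinearMap.add_apply, hx, hy, add_zero]
      | smul c x _ hx =>
        have : c • x = c * x := rfl
        rw [this, map_mul, Module.End.mul_apply, hx, map_zero]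
    -- key: u * ⟨α⟩ - ⟨π u α⟩ ∈ K
    have key1 : ∀ u : Utilde k A S aS, ∀ α : A,
        u * UtildeA k A S aS α - UtildeA k A S aS (π u α) ∈ K := by
      intro u
      induction u using utilde_induction aS with
      | halg c =>
        intro α
        rw [utilde_scalar aS, ← utildeA_mul, hA]
        have : (Algebra.lmul k A (algebraMap k A c)) α = algebraMap k A c * α := rfl
        rw [this, sub_self]
        exact K.zero_mem
      | hA β =>
        intro α
        rw [← utildeA_mul, hA]
        have : (Algebra.lmul k A β) α = β * α := rfl
        rw [this, sub_self]
        exact K.zero_mem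
      | hS s =>
        intro α
        rw [utilde_der aS, hS]
        have : (aS s).toLinearMap α = aS s α := rfl
        rw [this, add_sub_cancel_right]
        exact K.smul_mem (UtildeA k A S aS α) (Submodule.subset_span ⟨s, rfl⟩)
      | hmul u v hu hv =>
        intro α
        have step : u * v * UtildeA k A S aS α - UtildeA k A S aS (π u (π v α)) =
            u * (v * UtildeA k A S aS α - UtildeA k A S aS (π v α)) +
            (u * UtildeA k A S aS (π v α) - UtildeA k A S aS (π u (π v α))) := by
          rw [mul_sub, ← mul_assoc, sub_add_sub_cancel]
        rw [map_mul]
        have : (π u * π v) α = π u (π v α) := rfl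
        rw [Module.End.mul_apply, step]
        exact K.add_mem (K.smul_mem u (hv α)) (hu (π v α))
      | hadd u v hu hv =>
        intro α
        have step : (u + v) * UtildeA k A S aS α - UtildeA k A S aS (π u α + π v α) =
            (u * UtildeA k A S aS α - UtildeA k A S aS (π u α)) +
            (v * UtildeA k A S aS α - UtildeA k A S aS (π v α)) := by
          rw [utildeA_add, add_mul]; abel
        rw [map_add, LinearMap.add_apply, step]
        exact K.add_mem (hu α) (hv α)
    -- hence u - ⟨ε u⟩ ∈ K
    have key2 : ∀ u : Utilde k A S aS, u - UtildeA k A S aS (π u 1) ∈ K := by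
      intro u
      have := key1 u 1
      have hone : UtildeA k A S aS 1 = 1 := by
        have := utilde_scalar aS (k := k) (A := A) (S := S) 1
        simpa using this.symm
      rwa [hone, mul_one] at this
    constructor
    · intro u
      constructor
      · intro hε
        have := key2 u
        rw [hε, utildeA_zero, sub_zero] at this
        exact this
      · exact hεK u
    · intro α
      refine ⟨UtildeA k A S aS α, ?_⟩
      show π (UtildeA k A S aS α) 1 = α
      rw [hA]
      simp [Algebra.lmul]
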